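/- (Theorem 1: full charge and dipole moment of a conducting ball.) Under the stated hypotheses, ∫_{-r}^{r} ( Σ_{j=1}^{n+1} c_j z^{j-1} ) dz = r b_1 and ∫_{-r}^{r} z ( Σ_{j=1}^{n+1} c_j z^{j-1} ) dz = r³ b_2. Physically: the full charge Q = 2πr ∫_{-r}^{r} σ(z) dz equals 4πε₀ r b_1 and is determined by the value b_1 of the external potential at the center of the ball, and the dipole moment D = 2πr ∫_{-r}^{r} z σ(z) dz equals 4πε₀ r³ b_2 and is determined by the value b_2 of the external field intensity at the center of the ball. -/

import Mathlib

open Polynomial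

/-- The n-th Legendre polynomial, defined via the Rodrigues formula
P_n(eta) = (1/(2^n n!)) d^n/d eta^n (eta^2 - 1)^n. -/
noncomputable def legendre (n : ℕ) : Polynomial ℝ :=
  ((1 : ℝ) / (2 ^ n * n.factorial)) • (Polynomial.derivative^[n] ((X ^ 2 - 1) ^ n))

/-- The matrix of moments of the Legendre polynomials:
F i j = ∫_{-1}^{1} P_{i-1}(eta) eta^{j-1} d eta (intended for i, j ≥ 1). -/
noncomputable def Fmat (i j : ℕ) : ℝ :=
  ∫ η in (-1 : ℝ)..1, (legendre (i - 1)).eval η * η ^ (j - 1)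

lemma legendre_zero' : legendre 0 = 1 := by simp [legendre]

lemma legendre_one' : legendre 1 = X := by
  simp [legendre, smul_smul]
  ext i; simp [smul_eq_C_mul]
  rw [show (1 + 1 : ℝ[X]) = C (1 + 1) by rw [C_add, C_1], coeff_C_mul]; ring

lemma Fmat_one (j : ℕ) (hj : 1 ≤ j) : Fmat 1 j = (1 - (-1 : ℝ) ^ j) / j := by
  unfold Fmat
  simp only [Nat.sub_self, legendre_zero', eval_one, one_mul]
  rw [integral_pow, Nat.sub_add_cancel hj]
  push_cast [Nat.cast_sub hj]
  ring

lemma Fmat_two (j : ℕ) (hj : 1 ≤ j) : Fmat 2 j = (1 - (-1 : ℝ) ^ (j + 1)) / (j + 1) := by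
  unfold Fmat
  simp only [show (2 : ℕ) - 1 = 1 from rfl, legendre_one', eval_X]
  have h : ∀ η : ℝ, η * η ^ (j - 1) = η ^ (j - 1 + 1) := fun η => by ring
  simp_rw [h]
  rw [integral_pow, Nat.sub_add_cancel hj]
  simp

/-- Theorem 1 (full charge and dipole moment of a conducting ball).
If the coefficients c solve the system Σ_j F_{ij} r^{j-1} c_j = r^{i-1} b_i,
i = 1, ..., n+1 (with b_i = 0 for i > n+1), then
∫_{-r}^{r} Σ_j c_j z^{j-1} dz = r b_1 and ∫_{-r}^{r} z Σ_j c_j z^{j-1} dz = r^3 b_2,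
i.e. the full charge Q = 4π ε₀ r b_1 and the dipole moment D = 4π ε₀ r^3 b_2. -/
theorem stmt_14 (r : ℝ) (hr : 0 < r) (n : ℕ) (b c : ℕ → ℝ)
    (hb0 : ∀ i, n + 1 < i → b i = 0)
    (hsys : ∀ i, 1 ≤ i → i ≤ n + 1 →
      (∑ j ∈ Finset.Icc 1 (n + 1), Fmat i j * r ^ (j - 1) * c j) = r ^ (i - 1) * b i) :
    (∫ z in (-r)..r, ∑ j ∈ Finset.Icc 1 (n + 1), c j * z ^ (j - 1)) = r * b 1 ∧
    (∫ z in (-r)..r, z * ∑ j ∈ Finset.Icc 1 (n + 1), c j * z ^ (j - 1)) = r ^ 3 * b 2 := by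
  constructor
  · have h1 := hsys 1 le_rfl (by omega)
    simp only [pow_zero, one_mul, Nat.sub_self] at h1
    rw [intervalIntegral.integral_finset_sum]
    · calc ∑ j ∈ Finset.Icc 1 (n + 1), ∫ z in (-r)..r, c j * z ^ (j - 1)
          = ∑ j ∈ Finset.Icc 1 (n + 1), r * (Fmat 1 j * r ^ (j - 1) * c j) := by
            refine Finset.sum_congr rfl fun j hj => ?_
            have hj1 : 1 ≤ j := (Finset.mem_Icc.mp hj).1
            rw [intervalIntegral.integral_const_mul, integral_pow, Nat.sub_add_cancel hj1,
              Fmat_one j hj1]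
            have hrr : r ^ j = r * r ^ (j - 1) := by
              rw [← pow_succ']; congr 1; omega
            rw [show (-r) ^ j = (-1 : ℝ) ^ j * r ^ j from by rw [neg_pow], hrr]
            push_cast [Nat.cast_sub hj1]
            ring
        _ = r * b 1 := by rw [← Finset.mul_sum, h1]
    · intro j _
      exact (Continuous.intervalIntegrable (by fun_prop) _ _)
  · rcases le_or_gt 2 (n + 1) with hn | hn
    · have h2 := hsys 2 (by omega) hn
      simp only [show (2 : ℕ) - 1 = 1 from rfl, pow_one] at h2
      simp_rw [Finset.mul_sum]
      rw [intervalIntegral.integral_finset_sum]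
      · calc ∑ j ∈ Finset.Icc 1 (n + 1), ∫ z in (-r)..r, z * (c j * z ^ (j - 1))
            = ∑ j ∈ Finset.Icc 1 (n + 1), r ^ 2 * (Fmat 2 j * r ^ (j - 1) * c j) := by
              refine Finset.sum_congr rfl fun j hj => ?_
              have hj1 : 1 ≤ j := (Finset.mem_Icc.mp hj).1
              have h : ∀ z : ℝ, z * (c j * z ^ (j - 1)) = c j * z ^ (j - 1 + 1) :=
                fun z => by ring
              simp_rw [h]
              rw [intervalIntegral.integral_const_mul, integral_pow, Nat.sub_add_cancel hj1,
                Fmat_two j hj1]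
              have hrr : r ^ (j + 1) = r ^ 2 * r ^ (j - 1) := by
                rw [← pow_add]; congr 1; omega
              rw [show (-r) ^ (j + 1) = (-1 : ℝ) ^ (j + 1) * r ^ (j + 1) from by rw [neg_pow],
                hrr]
              push_cast
              ring
          _ = r ^ 3 * b 2 := by rw [← Finset.mul_sum, h2]; ring
      · intro j _
        exact (Continuous.intervalIntegrable (by fun_prop) _ _)
    · -- n = 0
      have hn0 : n = 0 := by omega
      subst hn0
      have hb2 : b 2 = 0 := hb0 2 (by omega)
      rw [hb2, mul_zero]
      simp only [Finset.Icc_self, Finset.sum_singleton, Nat.sub_self, pow_zero, mul_one]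
      rw [intervalIntegral.integral_mul_const, integral_id]
      ring
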